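/- For every real ν, every x > 0 and every t > 0, the Shu function solves the parabolic partial differential equation x²·∂²S_ν/∂x² (x,t) + x·∂S_ν/∂x (x,t) - (x² + ν²)·S_ν(x,t) - x²·∂S_ν/∂t (x,t) = 0, where ∂S_ν/∂x and ∂²S_ν/∂x² denote the first and second partial derivatives with respect to x, and ∂S_ν/∂t the partial derivative with respect to t. -/

import Mathlib

open Real MeasureTheory Filter Set

/-- The Shu function `S_ν(x,t) = (1/2)(x/2)^ν ∫_0^t τ^{-(ν+1)} e^{-τ - x²/(4τ)} dτ`. -/
noncomputable def shu (ν x t : ℝ) : ℝ :=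
  (1/2) * (x/2) ^ ν * ∫ τ in (0:ℝ)..t, τ ^ (-(ν+1)) * Real.exp (-τ - x^2 / (4*τ))


noncomputable def shuE (x τ : ℝ) : ℝ := Real.exp (-τ - x^2/(4*τ))
noncomputable def shuF (a x t : ℝ) : ℝ := ∫ τ in (0:ℝ)..t, τ ^ a * shuE x τ

lemma shu_tendsto_zero (a c : ℝ) (hc : 0 < c) :
    Tendsto (fun τ : ℝ => τ ^ a * Real.exp (-(c/τ))) (nhdsWithin 0 (Set.Ioi 0)) (nhds 0) := by
  have h1 : Tendsto (fun y : ℝ => y ^ (-a) * Real.exp (-c * y)) atTop (nhds 0) :=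
    tendsto_rpow_mul_exp_neg_mul_atTop_nhds_zero (-a) c hc
  have h2 := h1.comp tendsto_inv_nhdsGT_zero
  refine h2.congr' ?_
  filter_upwards [self_mem_nhdsWithin] with τ (hτ : 0 < τ)
  simp only [Function.comp]
  rw [Real.inv_rpow hτ.le, Real.rpow_neg hτ.le, inv_inv]
  congr 1
  ring

lemma shuE_tendsto_zero (a x : ℝ) (hx : 0 < x) :
    Tendsto (fun τ : ℝ => τ ^ a * shuE x τ) (nhdsWithin 0 (Set.Ioi 0)) (nhds 0) := by
  have h1 := shu_tendsto_zero a (x^2/4) (by positivity)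
  have h2 : Tendsto (fun τ : ℝ => Real.exp (-τ)) (nhdsWithin 0 (Set.Ioi 0)) (nhds 1) := by
    have h := ((Real.continuous_exp.comp continuous_neg).tendsto 0).mono_left
      (nhdsWithin_le_nhds (s := Set.Ioi (0:ℝ)))
    simpa [Function.comp_def] using h
  have h3 := h1.mul h2
  rw [zero_mul] at h3
  refine h3.congr ?_
  intro τ
  unfold shuE
  rw [mul_assoc, ← Real.exp_add]
  congr 2
  ring

lemma contOn_ext {f : ℝ → ℝ} {t : ℝ}
    (hf : ∀ τ : ℝ, 0 < τ → ContinuousAt f τ)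
    (h0 : Tendsto f (nhdsWithin 0 (Set.Ioi 0)) (nhds 0)) :
    ContinuousOn (fun τ => if τ ≤ 0 then 0 else f τ) (Set.Icc 0 t) := by
  intro τ0 hτ0
  rcases eq_or_lt_of_le hτ0.1 with h | h
  · subst h
    have key : ContinuousWithinAt (fun τ => if τ ≤ 0 then (0:ℝ) else f τ) (Set.Ici (0:ℝ)) 0 := ?_
    · exact key.mono Set.Icc_subset_Ici_self
    unfold ContinuousWithinAt
    have hs : Set.Ici (0:ℝ) = {0} ∪ Set.Ioi 0 := by
      ext y; simp [le_iff_lt_or_eq, or_comm, eq_comm]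
    rw [hs, nhdsWithin_union, nhdsWithin_singleton]
    simp only [if_pos le_rfl]
    refine Tendsto.sup ?_ ?_
    · simpa using tendsto_pure_nhds (fun τ => if τ ≤ 0 then 0 else f τ) 0
    · refine h0.congr' ?_
      filter_upwards [self_mem_nhdsWithin] with τ (hτ : 0 < τ)
      rw [if_neg (not_le.mpr hτ)]
  · have he : f =ᶠ[nhds τ0] (fun τ => if τ ≤ 0 then 0 else f τ) := by
      filter_upwards [Ioi_mem_nhds h] with τ (hτ : 0 < τ)
      rw [if_neg (not_le.mpr hτ)]
    exact ((hf τ0 h).congr he).continuousWithinAt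

lemma exists_bound_ext {f : ℝ → ℝ} {t : ℝ}
    (hf : ∀ τ : ℝ, 0 < τ → ContinuousAt f τ)
    (h0 : Tendsto f (nhdsWithin 0 (Set.Ioi 0)) (nhds 0)) :
    ∃ C : ℝ, ∀ τ ∈ Set.Ioc (0:ℝ) t, |f τ| ≤ C := by
  obtain ⟨C, hC⟩ := isCompact_Icc.exists_bound_of_continuousOn (contOn_ext (t := t) hf h0)
  refine ⟨C, fun τ hτ => ?_⟩
  have := hC τ ⟨hτ.1.le, hτ.2⟩
  rwa [Real.norm_eq_abs, if_neg (not_le.mpr hτ.1)] at this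

lemma intervalIntegrable_ext {f : ℝ → ℝ} {t : ℝ} (ht : 0 < t)
    (hf : ∀ τ : ℝ, 0 < τ → ContinuousAt f τ)
    (h0 : Tendsto f (nhdsWithin 0 (Set.Ioi 0)) (nhds 0)) :
    IntervalIntegrable f volume 0 t := by
  have hg : IntervalIntegrable (fun τ => if τ ≤ 0 then 0 else f τ) volume 0 t := by
    apply ContinuousOn.intervalIntegrable
    rw [Set.uIcc_of_le ht.le]
    exact contOn_ext hf h0
  rw [intervalIntegrable_iff_integrableOn_Ioc_of_le ht.le] at hg ⊢
  refine hg.congr_fun (fun τ hτ => ?_) measurableSet_Ioc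
  simp only [if_neg (not_le.mpr hτ.1)]

lemma contAt_base (a x τ : ℝ) (hτ : 0 < τ) :
    ContinuousAt (fun τ : ℝ => τ ^ a * shuE x τ) τ := by
  apply ContinuousAt.mul
  · exact Real.continuousAt_rpow_const τ a (Or.inl hτ.ne')
  · unfold shuE
    apply Real.continuous_exp.continuousAt.comp
    exact (continuousAt_id.neg).sub
      (continuousAt_const.div (continuousAt_const.mul continuousAt_id) (by positivity))

lemma contAt_aux (a c τ : ℝ) (hτ : 0 < τ) :
    ContinuousAt (fun τ : ℝ => τ ^ a * Real.exp (-(c/τ))) τ := by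
  apply ContinuousAt.mul
  · exact Real.continuousAt_rpow_const τ a (Or.inl hτ.ne')
  · exact Real.continuous_exp.continuousAt.comp
      ((continuousAt_const.div continuousAt_id hτ.ne').neg)

lemma bdd_aux (a c t : ℝ) (hc : 0 < c) :
    ∃ C : ℝ, ∀ τ ∈ Set.Ioc (0:ℝ) t, τ ^ a * Real.exp (-(c/τ)) ≤ C := by
  obtain ⟨C, hC⟩ := exists_bound_ext (t := t) (contAt_aux a c) (shu_tendsto_zero a c hc)
  exact ⟨C, fun τ hτ => (le_abs_self _).trans (hC τ hτ)⟩

lemma intInt_base (a x t : ℝ) (hx : 0 < x) (ht : 0 < t) :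
    IntervalIntegrable (fun τ : ℝ => τ ^ a * shuE x τ) volume 0 t :=
  intervalIntegrable_ext ht (contAt_base a x) (shuE_tendsto_zero a x hx)

lemma meas_base (a x : ℝ) : Measurable (fun τ : ℝ => τ ^ a * shuE x τ) := by
  apply Measurable.mul
  · exact measurable_id.pow measurable_const
  · unfold shuE
    exact Real.measurable_exp.comp ((measurable_neg).sub
      (measurable_const.div ((measurable_const.mul measurable_id))))

lemma hasDerivAt_base_x (a τ : ℝ) (hτ : 0 < τ) (y : ℝ) :
    HasDerivAt (fun y => τ ^ a * shuE y τ) (-(y/2) * (τ ^ (a-1) * shuE y τ)) y := by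
  have h1 : HasDerivAt (fun y:ℝ => y^2) (2*y) y := by simpa using hasDerivAt_pow 2 y
  have h3 : HasDerivAt (fun y:ℝ => -τ - y^2/(4*τ)) (-(2*y/(4*τ))) y :=
    (h1.div_const (4*τ)).const_sub (-τ)
  have h5 := (h3.exp).const_mul (τ ^ a)
  have hne : τ ≠ 0 := hτ.ne'
  refine h5.congr_deriv ?_
  rw [Real.rpow_sub hτ, Real.rpow_one]
  unfold shuE
  field_simp
  ring

lemma hasDerivAt_shuF_x (a x t : ℝ) (hx : 0 < x) (ht : 0 < t) :
    HasDerivAt (fun y => shuF a y t) (-(x/2) * shuF (a-1) x t) x := by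
  obtain ⟨C, hC⟩ := bdd_aux (a-1) (x^2/16) t (by positivity)
  set μ := volume.restrict (Set.Ioc (0:ℝ) t) with hμ
  have hball : ∀ y ∈ Metric.ball x (x/2), x/2 ≤ y ∧ |y| ≤ 3*x/2 := by
    intro y hy
    rw [Metric.mem_ball, Real.dist_eq, abs_lt] at hy
    constructor
    · linarith [hy.1]
    · rw [abs_le]; constructor <;> linarith [hy.1, hy.2]
  have key := hasDerivAt_integral_of_dominated_loc_of_deriv_le
      (μ := μ) (x₀ := x) (s := Metric.ball x (x/2))
      (F := fun y τ => τ ^ a * shuE y τ)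
      (F' := fun y τ => -(y/2) * (τ ^ (a-1) * shuE y τ))
      (bound := fun _ => (3*x/4) * C) (Metric.ball_mem_nhds x (by positivity))
      ?meas ?int ?meas' ?bdd ?bint ?diff
  case meas =>
    filter_upwards with y
    exact (meas_base a y).aestronglyMeasurable
  case int =>
    have := intInt_base a x t hx ht
    rwa [intervalIntegrable_iff_integrableOn_Ioc_of_le ht.le] at this
  case meas' =>
    exact (measurable_const.mul (meas_base (a-1) x)).aestronglyMeasurable
  case bdd =>
    filter_upwards [ae_restrict_mem measurableSet_Ioc] with τ hτ
    intro y hy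
    obtain ⟨hy1, hy2⟩ := hball y hy
    have hτ0 : 0 < τ := hτ.1
    have hE : shuE y τ ≤ Real.exp (-(x^2/16/τ)) := by
      apply Real.exp_le_exp.mpr
      have h1 : x^2/16/τ ≤ y^2/(4*τ) := by
        rw [div_div, div_le_div_iff₀ (by positivity) (by positivity)]
        have h4 : x^2 ≤ 4*y^2 := by nlinarith
        nlinarith [mul_le_mul_of_nonneg_right h4 (by positivity : (0:ℝ) ≤ 4*τ)]
      linarith
    have hEpos : 0 ≤ shuE y τ := (Real.exp_pos _).le
    have hrp : (0:ℝ) ≤ τ ^ (a-1) := Real.rpow_nonneg hτ0.le _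
    rw [Real.norm_eq_abs, abs_mul, abs_neg, abs_div, abs_two,
      abs_of_nonneg (mul_nonneg hrp hEpos)]
    have step1 : |y|/2 ≤ 3*x/4 := by linarith
    have step2 : τ ^ (a-1) * shuE y τ ≤ C := by
      calc τ ^ (a-1) * shuE y τ ≤ τ ^ (a-1) * Real.exp (-(x^2/16/τ)) :=
            mul_le_mul_of_nonneg_left hE hrp
        _ ≤ C := hC τ hτ
    exact mul_le_mul step1 step2 (mul_nonneg hrp hEpos) (by positivity)
  case bint =>
    exact integrable_const _
  case diff =>
    filter_upwards [ae_restrict_mem measurableSet_Ioc] with τ hτ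
    intro y _
    exact hasDerivAt_base_x a τ hτ.1 y
  have h := key.2
  have e1 : ∀ y : ℝ, (∫ τ, τ ^ a * shuE y τ ∂μ) = shuF a y t := by
    intro y
    rw [shuF, intervalIntegral.integral_of_le ht.le]
  have e2 : (∫ τ, -(x/2) * (τ ^ (a-1) * shuE x τ) ∂μ) = -(x/2) * shuF (a-1) x t := by
    rw [MeasureTheory.integral_const_mul, shuF, intervalIntegral.integral_of_le ht.le]
  rw [e2] at h
  exact h.congr_deriv rfl |>.congr_of_eventuallyEq (by filter_upwards with y; rw [e1 y])

lemma stronglyMeas_base (a x : ℝ) :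
    StronglyMeasurableAtFilter (fun τ : ℝ => τ ^ a * shuE x τ) (nhds t) volume :=
  ((meas_base a x).stronglyMeasurable).stronglyMeasurableAtFilter

lemma hasDerivAt_shuF_t (a x t : ℝ) (hx : 0 < x) (ht : 0 < t) :
    HasDerivAt (fun s => shuF a x s) (t ^ a * shuE x t) t :=
  intervalIntegral.integral_hasDerivAt_right (intInt_base a x t hx ht)
    ((meas_base a x).stronglyMeasurable).stronglyMeasurableAtFilter
    (contAt_base a x t ht)

lemma hasDerivAt_base_t (a x τ : ℝ) (hx : 0 < x) (hτ : 0 < τ) :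
    HasDerivAt (fun τ => τ ^ a * shuE x τ)
      ((x^2/4) * (τ ^ (a-2) * shuE x τ) + a * (τ ^ (a-1) * shuE x τ) - τ ^ a * shuE x τ) τ := by
  have hr : HasDerivAt (fun τ : ℝ => τ ^ a) (a * τ ^ (a-1)) τ :=
    Real.hasDerivAt_rpow_const (Or.inl hτ.ne')
  have h0 : HasDerivAt (fun τ : ℝ => x^2/(4*τ)) (x^2/4 * -(τ^2)⁻¹) τ := by
    have := (hasDerivAt_inv hτ.ne').const_mul (x^2/4)
    refine this.congr_of_eventuallyEq ?_
    filter_upwards with s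
    rw [div_eq_mul_inv, div_eq_mul_inv, mul_inv]
    ring
  have hinner := ((hasDerivAt_id τ).neg).sub h0
  have total := hr.mul hinner.exp
  have e1 : τ ^ (a-1) = τ ^ a / τ := by rw [Real.rpow_sub hτ, Real.rpow_one]
  have e2 : τ ^ (a-2) = τ ^ a / τ^2 := by
    rw [Real.rpow_sub hτ, show (2:ℝ) = ((2:ℕ):ℝ) by norm_num, Real.rpow_natCast]
  refine total.congr_deriv ?_
  unfold shuE
  simp only [Pi.sub_apply, Pi.neg_apply, id]
  rw [e1, e2]
  have h2 : τ^2 ≠ 0 := by positivity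
  field_simp
  ring

lemma shuF_ftc (a x t : ℝ) (hx : 0 < x) (ht : 0 < t) :
    (x^2/4) * shuF (a-2) x t + a * shuF (a-1) x t - shuF a x t = t ^ a * shuE x t := by
  set G := fun τ : ℝ => if τ ≤ 0 then (0:ℝ) else τ ^ a * shuE x τ with hG
  have hcont : ContinuousOn G (Set.Icc 0 t) :=
    contOn_ext (contAt_base a x) (shuE_tendsto_zero a x hx)
  have hderiv : ∀ τ ∈ Set.Ioo (0:ℝ) t, HasDerivWithinAt G
      ((x^2/4) * (τ ^ (a-2) * shuE x τ) + a * (τ ^ (a-1) * shuE x τ) - τ ^ a * shuE x τ)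
      (Set.Ioi τ) τ := by
    intro τ hτ
    have hd := hasDerivAt_base_t a x τ hx hτ.1
    have he : (fun τ : ℝ => τ ^ a * shuE x τ) =ᶠ[nhds τ] G := by
      filter_upwards [Ioi_mem_nhds hτ.1] with s (hs : 0 < s)
      rw [hG]; simp only [if_neg (not_le.mpr hs)]
    exact (hd.congr_of_eventuallyEq he.symm).hasDerivWithinAt
  have i2 := intInt_base (a-2) x t hx ht
  have i1 := intInt_base (a-1) x t hx ht
  have i0 := intInt_base a x t hx ht
  have hint : IntervalIntegrable (fun τ => (x^2/4) * (τ ^ (a-2) * shuE x τ)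
      + a * (τ ^ (a-1) * shuE x τ) - τ ^ a * shuE x τ) volume 0 t :=
    ((i2.const_mul _).add (i1.const_mul _)).sub i0
  have key := intervalIntegral.integral_eq_sub_of_hasDeriv_right_of_le ht.le hcont hderiv hint
  have hG0 : G 0 = 0 := by rw [hG]; simp
  have hGt : G t = t ^ a * shuE x t := by rw [hG]; simp [not_le.mpr ht]
  rw [hG0, hGt, sub_zero] at key
  rw [← key, intervalIntegral.integral_sub ((i2.const_mul _).add (i1.const_mul _)) i0,
    intervalIntegral.integral_add (i2.const_mul _) (i1.const_mul _),
    intervalIntegral.integral_const_mul, intervalIntegral.integral_const_mul]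
  rfl

lemma shu_eq (ν x t : ℝ) : shu ν x t = 1/2 * ((x/2) ^ ν * shuF (-(ν+1)) x t) := by
  unfold shu shuF shuE; ring

noncomputable def shuD1 (ν x t : ℝ) : ℝ :=
  1/2 * ((ν * (x/2)^(ν-1) * (1/2)) * shuF (-(ν+1)) x t
    + (x/2)^ν * (-(x/2) * shuF (-(ν+1)-1) x t))

lemma hasDerivAt_rpow_half (p y : ℝ) (hy : 0 < y) :
    HasDerivAt (fun z : ℝ => (z/2)^p) (p * (y/2)^(p-1) * (1/2)) y := by
  have h1 : HasDerivAt (fun z : ℝ => z/2) (1/2) y := (hasDerivAt_id y).div_const 2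
  have h2 := Real.hasDerivAt_rpow_const (x := y/2) (p := p) (Or.inl (by positivity))
  exact h2.comp y h1

lemma hasDerivAt_shu_x (ν t : ℝ) (ht : 0 < t) (x : ℝ) (hx : 0 < x) :
    HasDerivAt (fun y => shu ν y t) (shuD1 ν x t) x := by
  have h1 := hasDerivAt_rpow_half ν x hx
  have h2 := hasDerivAt_shuF_x (-(ν+1)) x t hx ht
  have h3 := (h1.mul h2).const_mul (1/2 : ℝ)
  refine HasDerivAt.congr_of_eventuallyEq h3 ?_
  filter_upwards with y
  rw [shu_eq]; rfl

theorem stmt_11 (ν x t : ℝ) (hx : 0 < x) (ht : 0 < t) :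
    x^2 * iteratedDeriv 2 (fun y => shu ν y t) x
      + x * deriv (fun y => shu ν y t) x
      - (x^2 + ν^2) * shu ν x t
      - x^2 * deriv (fun s => shu ν x s) t = 0 := by
  have hhalf : (0:ℝ) < x/2 := by positivity
  -- second derivative pieces
  have hA := ((hasDerivAt_rpow_half (ν-1) x hx).const_mul ν).mul_const (1/2 : ℝ)
  have hF1 := hasDerivAt_shuF_x (-(ν+1)) x t hx ht
  have hB := hA.mul hF1
  have hC1 : HasDerivAt (fun y : ℝ => -(y/2)) (-(1/2) : ℝ) x := ((hasDerivAt_id x).div_const 2).neg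
  have hF2 := hasDerivAt_shuF_x (-(ν+1)-1) x t hx ht
  have hC := hC1.mul hF2
  have hD := (hasDerivAt_rpow_half ν x hx).mul hC
  have hE := (hB.add hD).const_mul (1/2 : ℝ)
  have hE' : HasDerivAt (fun y => shuD1 ν y t)
      (1/2 * ((ν * ((ν-1) * (x/2)^(ν-1-1) * (1/2)) * (1/2)) * shuF (-(ν+1)) x t
        + (ν * (x/2)^(ν-1) * (1/2)) * (-(x/2) * shuF (-(ν+1)-1) x t)
        + ((ν * (x/2)^(ν-1) * (1/2)) * (-(x/2) * shuF (-(ν+1)-1) x t)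
          + (x/2)^ν * (-(1/2) * shuF (-(ν+1)-1) x t
            + -(x/2) * (-(x/2) * shuF (-(ν+1)-1-1) x t))))) x := hE
  -- first derivative of shu in x
  have hd1 : deriv (fun y => shu ν y t) x = shuD1 ν x t := (hasDerivAt_shu_x ν t ht x hx).deriv
  -- second derivative
  have h2d : iteratedDeriv 2 (fun y => shu ν y t) x
      = deriv (fun y => shuD1 ν y t) x := by
    rw [iteratedDeriv_succ, iteratedDeriv_one]
    apply Filter.EventuallyEq.deriv_eq
    filter_upwards [Ioi_mem_nhds hx] with y (hy : 0 < y)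
    exact (hasDerivAt_shu_x ν t ht y hy).deriv
  -- t derivative
  have hst : deriv (fun s => shu ν x s) t = (1/2 * (x/2)^ν) * (t^(-(ν+1)) * shuE x t) := by
    have h := (hasDerivAt_shuF_t (-(ν+1)) x t hx ht).const_mul (1/2 * (x/2)^ν : ℝ)
    have he : (fun s => shu ν x s) = fun s => (1/2 * (x/2)^ν : ℝ) * shuF (-(ν+1)) x s := by
      funext s; rw [shu_eq]; ring
    rw [he]
    exact h.deriv
  -- FTC identity
  have hftc := shuF_ftc (-(ν+1)) x t hx ht
  rw [show (-(ν+1)-2:ℝ) = -(ν+1)-1-1 by ring] at hftc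
  -- rpow identities
  have hP1 : (x/2)^(ν-1) * (x/2) = (x/2)^ν := by
    rw [← Real.rpow_add_one hhalf.ne' (ν-1)]; norm_num
  have hP2 : (x/2)^(ν-1-1) * (x/2) = (x/2)^(ν-1) := by
    rw [← Real.rpow_add_one hhalf.ne' (ν-1-1)]; norm_num
  rw [h2d, hE'.deriv, hd1, hst, shu_eq, shuD1]
  rw [← hP1, ← hP2] at *
  linear_combination (2*(x/2)^4*((x/2)^(ν-1-1))) * hftc
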